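/- arXiv:2208.08716 — 8 statements merged into one kernel-verified Lean document; each statement's English description precedes it below -/
import Mathlib

section
/- Let t ≥ 1 be an integer, let w_M, w_N ∈ ℤ, and let p_1 < p_2 < ⋯ < p_{t+1} and a_1 < a_2 < ⋯ < a_t be strictly increasing integer sequences satisfying p_i + p_{t+2−i} = w_M for all 1 ≤ i ≤ t+1 and a_j + a_{t+1−j} = w_N for all 1 ≤ j ≤ t. Assume there exists Q ∈ ℤ such that −p_{t+2−i} < a_i + Q ≤ −p_{t+1−i} for all 1 ≤ i ≤ t. Set q★ := min_{1≤i≤t}(p_{t+2−i} + a_i), and let H be the multiset of integers {p_i + a_j : 1 ≤ i ≤ t+1, 1 ≤ j ≤ t}, each pair (i,j) contributing exactly one element, so that H has t(t+1) elements counted with multiplicity. Then the number of elements of H (with multiplicity) that are strictly less than q★ equals the number of elements of H that are ≥ q★, and both numbers equal t(t+1)/2. -/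
open Finset in
/-- Real-place case of the combinatorial lemma on Hodge types (Lemma 4.6). -/
theorem stmt_0 (t : ℕ) (ht : 1 ≤ t) (wM wN : ℤ) (p a : ℕ → ℤ)
    (hp : ∀ i j, 1 ≤ i → i < j → j ≤ t + 1 → p i < p j)
    (ha : ∀ i j, 1 ≤ i → i < j → j ≤ t → a i < a j)
    (hpw : ∀ i, 1 ≤ i → i ≤ t + 1 → p i + p (t + 2 - i) = wM)
    (haw : ∀ j, 1 ≤ j → j ≤ t → a j + a (t + 1 - j) = wN)
    (hQ : ∃ Q : ℤ, ∀ i, 1 ≤ i → i ≤ t →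
      -p (t + 2 - i) < a i + Q ∧ a i + Q ≤ -p (t + 1 - i))
    (qstar : ℤ)
    (hqstar : IsLeast {v : ℤ | ∃ i, 1 ≤ i ∧ i ≤ t ∧ v = p (t + 2 - i) + a i} qstar) :
    ((Icc 1 (t + 1) ×ˢ Icc 1 t).filter (fun ij => p ij.1 + a ij.2 < qstar)).card
        = ((Icc 1 (t + 1) ×ˢ Icc 1 t).filter (fun ij => qstar ≤ p ij.1 + a ij.2)).card ∧
    ((Icc 1 (t + 1) ×ˢ Icc 1 t).filter (fun ij => p ij.1 + a ij.2 < qstar)).card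
        = t * (t + 1) / 2 ∧
    ((Icc 1 (t + 1) ×ˢ Icc 1 t).filter (fun ij => qstar ≤ p ij.1 + a ij.2)).card
        = t * (t + 1) / 2 := by
  obtain ⟨Q, hQ'⟩ := hQ
  obtain ⟨⟨i₀, hi₀1, hi₀t, hq0⟩, hqlb⟩ := hqstar
  have hnegQ : -Q < qstar := by
    have h := (hQ' i₀ hi₀1 hi₀t).1
    linarith [hq0, h]
  have key : ∀ i j : ℕ, 1 ≤ i → i ≤ t + 1 → 1 ≤ j → j ≤ t →
      (p i + a j < qstar ↔ i + j ≤ t + 1) := by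
    intro i j hi1 hi hj1 hj
    constructor
    · intro h
      by_contra hc
      push_neg at hc
      have h1 : t + 2 - j ≤ i := by omega
      have h2 : p (t + 2 - j) ≤ p i := by
        rcases eq_or_lt_of_le h1 with h' | h'
        · rw [h']
        · exact le_of_lt (hp _ _ (by omega) h' hi)
      have h3 : qstar ≤ p (t + 2 - j) + a j := hqlb ⟨j, hj1, hj, rfl⟩
      linarith
    · intro h
      have h1 : i ≤ t + 1 - j := by omega
      have h2 : p i ≤ p (t + 1 - j) := by
        rcases eq_or_lt_of_le h1 with h' | h'
        · rw [h']
        · exact le_of_lt (hp _ _ hi1 h' (by omega))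
      have h3 := (hQ' j hj1 hj).2
      linarith
  set A := (Icc 1 (t + 1) ×ˢ Icc 1 t).filter (fun ij => p ij.1 + a ij.2 < qstar) with hA
  set B := (Icc 1 (t + 1) ×ˢ Icc 1 t).filter (fun ij => qstar ≤ p ij.1 + a ij.2) with hB
  have memA : ∀ ij : ℕ × ℕ, ij ∈ A ↔
      (1 ≤ ij.1 ∧ ij.1 ≤ t + 1 ∧ 1 ≤ ij.2 ∧ ij.2 ≤ t ∧ ij.1 + ij.2 ≤ t + 1) := by
    intro ij
    simp only [hA, mem_filter, mem_product, mem_Icc]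
    constructor
    · rintro ⟨⟨⟨h1, h2⟩, h3, h4⟩, h5⟩
      exact ⟨h1, h2, h3, h4, (key _ _ h1 h2 h3 h4).1 h5⟩
    · rintro ⟨h1, h2, h3, h4, h5⟩
      exact ⟨⟨⟨h1, h2⟩, h3, h4⟩, (key _ _ h1 h2 h3 h4).2 h5⟩
  have memB : ∀ ij : ℕ × ℕ, ij ∈ B ↔
      (1 ≤ ij.1 ∧ ij.1 ≤ t + 1 ∧ 1 ≤ ij.2 ∧ ij.2 ≤ t ∧ t + 2 ≤ ij.1 + ij.2) := by
    intro ij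
    simp only [hB, mem_filter, mem_product, mem_Icc]
    constructor
    · rintro ⟨⟨⟨h1, h2⟩, h3, h4⟩, h5⟩
      refine ⟨h1, h2, h3, h4, ?_⟩
      by_contra hc
      exact absurd ((key _ _ h1 h2 h3 h4).2 (by omega)) (not_lt.2 h5)
    · rintro ⟨h1, h2, h3, h4, h5⟩
      refine ⟨⟨⟨h1, h2⟩, h3, h4⟩, not_lt.1 fun hlt => ?_⟩
      have := (key _ _ h1 h2 h3 h4).1 hlt
      omega
  have hcardeq : A.card = B.card := by
    apply Finset.card_bij (fun ij _ => (t + 2 - ij.1, t + 1 - ij.2))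
    · intro ij hij
      rw [memA] at hij
      rw [memB]
      omega
    · intro x hx y hy hxy
      rw [memA] at hx hy
      have h1 : t + 2 - x.1 = t + 2 - y.1 := congrArg Prod.fst hxy
      have h2 : t + 1 - x.2 = t + 1 - y.2 := congrArg Prod.snd hxy
      ext <;> omega
    · intro b hb
      rw [memB] at hb
      refine ⟨(t + 2 - b.1, t + 1 - b.2), ?_, ?_⟩
      · rw [memA]; omega
      · ext <;> simp <;> omega
  have htot : A.card + B.card = (t + 1) * t := by
    have hBeq : B = (Icc 1 (t + 1) ×ˢ Icc 1 t).filter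
        (fun ij => ¬ (p ij.1 + a ij.2 < qstar)) := by
      simp [hB, not_lt]
    rw [hA, hBeq, Finset.card_filter_add_card_filter_not,
      Finset.card_product, Nat.card_Icc, Nat.card_Icc]
    congr 1 <;> omega
  have htot' : A.card + B.card = t * (t + 1) := by rw [htot, Nat.mul_comm]
  refine ⟨hcardeq, ?_, ?_⟩ <;>
  · generalize hg : t * (t + 1) = m at htot' ⊢
    omega
end

section
/- Let t ≥ 1 be an integer and Q ∈ ℤ. Let P and P′ be non-decreasing integer sequences of length t+1, and let A and A′ be non-decreasing integer sequences of length t. Assume that for every R ∈ {P, P′}, every B ∈ {A, A′}, and every 1 ≤ i ≤ t one has −R_{t+2−i} < B_i + Q ≤ −R_{t+1−i}. Then for all integers α and k with 2 ≤ α ≤ t+1 and 1 ≤ k ≤ α−1, all 1 ≤ i ≤ t, and all choices R, R′ ∈ {P, P′} and B, B′ ∈ {A, A′}, the strict inequality R′_{α−k} + B′_k < R_{t+2−i} + B_i holds. -/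
lemma mono_aux (t : ℕ) (f : ℕ → ℤ) (hf : ∀ i, 1 ≤ i → i ≤ t → f i ≤ f (i + 1)) :
    ∀ m n, 1 ≤ m → m ≤ n → n ≤ t + 1 → f m ≤ f n := by
  intro m n hm hmn hn
  induction n with
  | zero => omega
  | succ n ih =>
    rcases Nat.eq_or_lt_of_le hmn with h | h
    · rw [h]
    · exact le_trans (ih (by omega) (by omega)) (hf n (by omega) (by omega))

/-- Claim (i) in the proof of the combinatorial lemma on Hodge types (Lemma 4.6). -/
theorem stmt_2 (t : ℕ) (ht : 1 ≤ t) (Q : ℤ) (P P' A A' : ℕ → ℤ)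
    (hP : ∀ i, 1 ≤ i → i ≤ t → P i ≤ P (i + 1))
    (hP' : ∀ i, 1 ≤ i → i ≤ t → P' i ≤ P' (i + 1))
    (hA : ∀ i, 1 ≤ i → i + 1 ≤ t → A i ≤ A (i + 1))
    (hA' : ∀ i, 1 ≤ i → i + 1 ≤ t → A' i ≤ A' (i + 1))
    (hQ : ∀ R ∈ ({P, P'} : Set (ℕ → ℤ)), ∀ B ∈ ({A, A'} : Set (ℕ → ℤ)),
      ∀ i, 1 ≤ i → i ≤ t → -R (t + 2 - i) < B i + Q ∧ B i + Q ≤ -R (t + 1 - i)) :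
    ∀ α k i, 2 ≤ α → α ≤ t + 1 → 1 ≤ k → k ≤ α - 1 → 1 ≤ i → i ≤ t →
      ∀ R ∈ ({P, P'} : Set (ℕ → ℤ)), ∀ R' ∈ ({P, P'} : Set (ℕ → ℤ)),
      ∀ B ∈ ({A, A'} : Set (ℕ → ℤ)), ∀ B' ∈ ({A, A'} : Set (ℕ → ℤ)),
        R' (α - k) + B' k < R (t + 2 - i) + B i := by
  intro α k i hα2 hαt hk1 hkα hi1 hit R hR R' hR' B hB B' hB'
  have h1 := (hQ R hR B hB i hi1 hit).1
  have h2 := (hQ R' hR' B' hB' k hk1 (by omega)).2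
  have hmono : R' (α - k) ≤ R' (t + 1 - k) := by
    have hprop : ∀ j, 1 ≤ j → j ≤ t → R' j ≤ R' (j + 1) := by
      rcases hR' with h | h <;> simp_all
    exact mono_aux t R' hprop (α - k) (t + 1 - k) (by omega) (by omega) (by omega)
  linarith
end

section
/- Let F be a totally real number field, n ≥ 1 an integer, and w an even integer. For each embedding τ : F → ℂ let μ_τ = (μ_{τ,1}, …, μ_{τ,n+1}) ∈ ℤ^{n+1} be dominant (μ_{τ,1} ≥ μ_{τ,2} ≥ ⋯ ≥ μ_{τ,n+1}) and pure of weight w (μ_{τ,i} + μ_{τ,n+2−i} = w for all 1 ≤ i ≤ n+1). Then there exist an integer w′ with w′ ≡ w (mod 2) and, for each embedding τ : F → ℂ, a tuple ν_τ = (ν_{τ,1}, …, ν_{τ,n}) ∈ ℤ^n, such that each ν_τ is dominant (ν_{τ,1} ≥ ⋯ ≥ ν_{τ,n}) and pure of weight w′ (ν_{τ,i} + ν_{τ,n+1−i} = w′ for all i), and there exists m₀ ∈ ℤ with −μ_{τ,n+2−i} ≥ ν_{τ,i} + m₀ ≥ −μ_{τ,n+1−i} for every embedding τ and every 1 ≤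 i ≤ n. -/
/-- Totally real case of Lemma 7.2 on weights. -/
theorem stmt_4 (F : Type*) [Field F] [NumberField F]
    (htr : ∀ τ : F →+* ℂ, NumberField.ComplexEmbedding.IsReal τ)
    (n : ℕ) (hn : 1 ≤ n) (w : ℤ) (hw : Even w)
    (μ : (F →+* ℂ) → ℕ → ℤ)
    (hdom : ∀ τ : F →+* ℂ, ∀ i, 1 ≤ i → i ≤ n → μ τ (i + 1) ≤ μ τ i)
    (hpure : ∀ τ : F →+* ℂ, ∀ i, 1 ≤ i → i ≤ n + 1 → μ τ i + μ τ (n + 2 - i) = w) :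
    ∃ w' : ℤ, w' % 2 = w % 2 ∧
    ∃ ν : (F →+* ℂ) → ℕ → ℤ,
      (∀ τ : F →+* ℂ, ∀ i, 1 ≤ i → i < n → ν τ (i + 1) ≤ ν τ i) ∧
      (∀ τ : F →+* ℂ, ∀ i, 1 ≤ i → i ≤ n → ν τ i + ν τ (n + 1 - i) = w') ∧
      ∃ m₀ : ℤ, ∀ τ : F →+* ℂ, ∀ i, 1 ≤ i → i ≤ n →
        ν τ i + m₀ ≤ -μ τ (n + 2 - i) ∧ -μ τ (n + 1 - i) ≤ ν τ i + m₀ := by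
  obtain ⟨half, hhalf⟩ := hw
  -- monotonicity of μ over the whole range
  have hmono : ∀ τ : F →+* ℂ, ∀ a b : ℕ, 1 ≤ a → a ≤ b → b ≤ n + 1 →
      μ τ b ≤ μ τ a := by
    intro τ a b ha hab hb
    induction b with
    | zero => omega
    | succ k ih =>
      rcases Nat.lt_or_ge a (k + 1) with h | h
      · have h1 := hdom τ k (by omega) (by omega)
        have h2 := ih (by omega) (by omega)
        linarith
      · have : a = k + 1 := by omega
        rw [this]
  refine ⟨-w, by omega,
    fun τ i => if 2 * i < n + 1 then -μ τ (n + 2 - i)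
      else if 2 * i = n + 1 then -half else -μ τ (n + 1 - i), ?_, ?_, 0, ?_⟩
  · -- dominance
    intro τ i h1 h2
    by_cases hA : 2 * (i + 1) < n + 1
    · have hA' : 2 * i < n + 1 := by omega
      simp only [if_pos hA, if_pos hA', neg_le_neg_iff]
      rw [show n + 2 - (i + 1) = n + 1 - i from by omega]
      exact hmono τ (n + 1 - i) (n + 2 - i) (by omega) (by omega) (by omega)
    · by_cases hB : 2 * (i + 1) = n + 1
      · -- i+1 is the middle, i is lower; n = 2i+1
        have hA' : 2 * i < n + 1 := by omega
        simp only [if_neg hA, if_pos hB, if_pos hA', neg_le_neg_iff]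
        -- goal: μ τ (n+2-i) ≤ half ; n+2-i = i+3
        rw [show n + 2 - i = i + 3 from by omega]
        have hp := hpure τ (i + 2) (by omega) (by omega)
        rw [show n + 2 - (i + 2) = i + 1 from by omega] at hp
        have hd1 := hmono τ (i + 1) (i + 2) (by omega) (by omega) (by omega)
        have hd2 := hmono τ (i + 2) (i + 3) (by omega) (by omega) (by omega)
        linarith
      · by_cases hC : 2 * i < n + 1
        · -- i lower, i+1 upper: n = 2i
          simp only [if_neg hA, if_neg hB, if_pos hC, neg_le_neg_iff]
          rw [show n + 1 - (i + 1) = n - i from by omega]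
          exact hmono τ (n - i) (n + 2 - i) (by omega) (by omega) (by omega)
        · by_cases hD : 2 * i = n + 1
          · -- i middle, i+1 upper; n = 2i-1
            simp only [if_neg hA, if_neg hB, if_neg hC, if_pos hD, neg_le_neg_iff]
            rw [show n + 1 - (i + 1) = i - 1 from by omega]
            -- goal: half ≤ μ τ (i-1)
            have hp := hpure τ i (by omega) (by omega)
            rw [show n + 2 - i = i + 1 from by omega] at hp
            have hd1 := hmono τ i (i + 1) (by omega) (by omega) (by omega)
            have hd2 := hmono τ (i - 1) i (by omega) (by omega) (by omega)
            linarith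
          · -- both upper
            simp only [if_neg hA, if_neg hB, if_neg hC, if_neg hD, neg_le_neg_iff]
            rw [show n + 1 - (i + 1) = n - i from by omega]
            exact hmono τ (n - i) (n + 1 - i) (by omega) (by omega) (by omega)
  · -- purity
    intro τ i h1 h2
    by_cases hA : 2 * i < n + 1
    · have hB : ¬ 2 * (n + 1 - i) < n + 1 := by omega
      have hC : ¬ 2 * (n + 1 - i) = n + 1 := by omega
      simp only [if_pos hA, if_neg hB, if_neg hC]
      rw [show n + 1 - (n + 1 - i) = i from by omega]
      have hp := hpure τ i (by omega) (by omega)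
      linarith
    · by_cases hD : 2 * i = n + 1
      · have : n + 1 - i = i := by omega
        rw [this]
        simp only [if_neg hA, if_pos hD]
        omega
      · have hB : 2 * (n + 1 - i) < n + 1 := by omega
        simp only [if_neg hA, if_neg hD, if_pos hB]
        rw [show n + 2 - (n + 1 - i) = i + 1 from by omega]
        have hp := hpure τ (i + 1) (by omega) (by omega)
        rw [show n + 2 - (i + 1) = n + 1 - i from by omega] at hp
        linarith
  · -- interlacing with m₀ = 0
    intro τ i h1 h2
    by_cases hA : 2 * i < n + 1
    · simp only [if_pos hA, add_zero]
      refine ⟨le_refl _, neg_le_neg ?_⟩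
      exact hmono τ (n + 1 - i) (n + 2 - i) (by omega) (by omega) (by omega)
    · by_cases hD : 2 * i = n + 1
      · simp only [if_neg hA, if_pos hD, add_zero]
        rw [show n + 2 - i = i + 1 from by omega, show n + 1 - i = i from by omega]
        have hp := hpure τ i (by omega) (by omega)
        rw [show n + 2 - i = i + 1 from by omega] at hp
        have hd := hmono τ i (i + 1) (by omega) (by omega) (by omega)
        constructor <;> [skip; skip] <;> omega
      · simp only [if_neg hA, if_neg hD, add_zero]
        refine ⟨neg_le_neg ?_, le_refl _⟩
        exact hmono τ (n + 1 - i) (n + 2 - i) (by omega) (by omega) (by omega)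
end

section
/- Let F be a totally imaginary number field (for instance a CM field), n ≥ 1 an integer, and w ∈ ℤ. For each embedding τ : F → ℂ write ρτ for the conjugate embedding (the composition of τ with complex conjugation). Let μ assign to each embedding τ a tuple μ_τ = (μ_{τ,1}, …, μ_{τ,n+1}) ∈ ℤ^{n+1} such that: each μ_τ is dominant (μ_{τ,1} ≥ ⋯ ≥ μ_{τ,n+1}); μ is pure of weight w (μ_{ρτ,i} = w − μ_{τ,n+2−i} for all τ and all 1 ≤ i ≤ n+1); and μ is in good position (min{μ_{τ,i}, w − μ_{τ,n+2−i}} ≥ max{μ_{τ,i+1}, w − μ_{τ,n+1−i}} for all τ and all 1 ≤ i ≤ n). Then there exist an integer w′ with w′ ≡ w (mod 2) and a family ν assigning to each embedding τ a tuple ν_τ = (ν_{τ,1}, …, ν_{τ,n}) ∈ ℤ^n such that: each ν_τ is dominant; ν is pure of weight w′ (ν_{ρτ,i} = w′ − ν_{τ,n+1−i} for all τ, i); ν is in good position (min{ν_{τ,i}, w′ − ν_{τ,n+1−i}} ≥ max{ν_{τ,i+1}, w′ − ν_{τ,n−i}} for all τ and all 1 ≤ i ≤ n−1); and there exists m₀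 ∈ ℤ such that for every embedding τ, every τ̃, τ̃′ ∈ {τ, ρτ}, and every 1 ≤ i ≤ n, one has −μ_{τ̃,n+2−i} ≥ ν_{τ̃′,i} + m₀ ≥ −μ_{τ̃,n+1−i} (the strong interlace condition). -/
/-- Lower bound for the interlacing interval. -/
def wA (μ : ℕ → ℤ) (w : ℤ) (n i : ℕ) : ℤ := max (μ (i+1) - w) (-(μ (n+1-i)))

/-- Upper bound for the interlacing interval. -/
def wB (μ : ℕ → ℤ) (w : ℤ) (n i : ℕ) : ℤ := min (μ i - w) (-(μ (n+2-i)))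

/-- The weight ν constructed in the proof. -/
noncomputable def wnu (F : Type*) [Field F] (μ : (F →+* ℂ) → ℕ → ℤ) (w : ℤ) (n : ℕ)
    (τ : F →+* ℂ) (i : ℕ) : ℤ :=
  if 2*i ≤ n then wB (μ τ) w n i
  else if n+2 ≤ 2*i then wA (μ τ) w n i
  else @ite _ (WellOrderingRel ((starRingEnd ℂ).comp τ) τ) (Classical.propDecidable _)
    (wB (μ τ) w n i) (wA (μ τ) w n i)

/-- CM (totally imaginary) case of Lemma 7.2 on weights.  Here the conjugate
embedding `ρτ` is formalized as `(starRingEnd ℂ).comp τ`. -/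
theorem stmt_5 (F : Type*) [Field F] [NumberField F]
    (hti : ∀ τ : F →+* ℂ, ¬ NumberField.ComplexEmbedding.IsReal τ)
    (n : ℕ) (hn : 1 ≤ n) (w : ℤ)
    (μ : (F →+* ℂ) → ℕ → ℤ)
    (hdom : ∀ τ : F →+* ℂ, ∀ i, 1 ≤ i → i ≤ n → μ τ (i + 1) ≤ μ τ i)
    (hpure : ∀ τ : F →+* ℂ, ∀ i, 1 ≤ i → i ≤ n + 1 →
      μ ((starRingEnd ℂ).comp τ) i = w - μ τ (n + 2 - i))
    (hgood : ∀ τ : F →+* ℂ, ∀ i, 1 ≤ i → i ≤ n →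
      max (μ τ (i + 1)) (w - μ τ (n + 1 - i)) ≤ min (μ τ i) (w - μ τ (n + 2 - i))) :
    ∃ w' : ℤ, w' % 2 = w % 2 ∧
    ∃ ν : (F →+* ℂ) → ℕ → ℤ,
      (∀ τ : F →+* ℂ, ∀ i, 1 ≤ i → i < n → ν τ (i + 1) ≤ ν τ i) ∧
      (∀ τ : F →+* ℂ, ∀ i, 1 ≤ i → i ≤ n →
        ν ((starRingEnd ℂ).comp τ) i = w' - ν τ (n + 1 - i)) ∧
      (∀ τ : F →+* ℂ, ∀ i, 1 ≤ i → i < n →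
        max (ν τ (i + 1)) (w' - ν τ (n - i)) ≤ min (ν τ i) (w' - ν τ (n + 1 - i))) ∧
      ∃ m₀ : ℤ, ∀ τ : F →+* ℂ,
        ∀ τ₁ ∈ ({τ, (starRingEnd ℂ).comp τ} : Set (F →+* ℂ)),
        ∀ τ₂ ∈ ({τ, (starRingEnd ℂ).comp τ} : Set (F →+* ℂ)),
        ∀ i, 1 ≤ i → i ≤ n →
          ν τ₂ i + m₀ ≤ -μ τ₁ (n + 2 - i) ∧ -μ τ₁ (n + 1 - i) ≤ ν τ₂ i + m₀ := by
  classical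
  -- conjugation is an involution
  have hρρ : ∀ τ : F →+* ℂ, (starRingEnd ℂ).comp ((starRingEnd ℂ).comp τ) = τ := by
    intro τ; ext x; simp
  -- no embedding is fixed by conjugation
  have hρne : ∀ τ : F →+* ℂ, τ ≠ (starRingEnd ℂ).comp τ := by
    intro τ h
    apply hti τ
    rw [NumberField.ComplexEmbedding.isReal_iff]
    ext x
    have := congrArg (fun f : F →+* ℂ => f x) h
    simpa [NumberField.ComplexEmbedding.conjugate_coe_eq] using this.symm
  -- conjugation invariance of B
  have hBρ : ∀ τ : F →+* ℂ, ∀ i, 1 ≤ i → i ≤ n →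
      wB (μ ((starRingEnd ℂ).comp τ)) w n i = wB (μ τ) w n i := by
    intro τ i h1 h2
    have e1 := hpure τ i h1 (by omega)
    have e2 := hpure τ (n+2-i) (by omega) (by omega)
    rw [show n+2-(n+2-i) = i from by omega] at e2
    simp only [wB, e1, e2]
    omega
  -- conjugation invariance of A
  have hAρ : ∀ τ : F →+* ℂ, ∀ i, 1 ≤ i → i ≤ n →
      wA (μ ((starRingEnd ℂ).comp τ)) w n i = wA (μ τ) w n i := by
    intro τ i h1 h2
    have e1 := hpure τ (i+1) (by omega) (by omega)
    have e2 := hpure τ (n+1-i) (by omega) (by omega)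
    rw [show n+2-(i+1) = n+1-i from by omega] at e1
    rw [show n+2-(n+1-i) = i+1 from by omega] at e2
    simp only [wA, e1, e2]
    omega
  -- A ≤ B
  have hAB : ∀ τ : F →+* ℂ, ∀ i, 1 ≤ i → i ≤ n → wA (μ τ) w n i ≤ wB (μ τ) w n i := by
    intro τ i h1 h2
    have := hgood τ i h1 h2
    simp only [wA, wB]
    omega
  -- monotonicity of B
  have hBmono : ∀ τ : F →+* ℂ, ∀ i, 1 ≤ i → i + 1 ≤ n →
      wB (μ τ) w n (i+1) ≤ wB (μ τ) w n i := by
    intro τ i h1 h2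
    have d1 := hdom τ i h1 (by omega)
    have d2 := hdom τ (n+1-i) (by omega) (by omega)
    rw [show n+1-i+1 = n+2-i from by omega] at d2
    simp only [wB, show n+2-(i+1) = n+1-i from by omega]
    omega
  -- monotonicity of A
  have hAmono : ∀ τ : F →+* ℂ, ∀ i, 1 ≤ i → i + 1 ≤ n →
      wA (μ τ) w n (i+1) ≤ wA (μ τ) w n i := by
    intro τ i h1 h2
    have d1 := hdom τ (i+1) (by omega) h2
    have d2 := hdom τ (n-i) (by omega) (by omega)
    rw [show n-i+1 = n+1-i from by omega] at d2
    simp only [wA, show n+1-(i+1) = n-i from by omega]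
    omega
  -- symmetry relation between A and B
  have hsym : ∀ τ : F →+* ℂ, ∀ i, 1 ≤ i → i ≤ n →
      wA (μ τ) w n (n+1-i) = -w - wB (μ τ) w n i := by
    intro τ i h1 h2
    simp only [wA, wB, show n+1-i+1 = n+2-i from by omega,
      show n+1-(n+1-i) = i from by omega]
    omega
  -- bounds for ν
  have hν_ub : ∀ τ : F →+* ℂ, ∀ i, 1 ≤ i → i ≤ n →
      wnu F μ w n τ i ≤ wB (μ τ) w n i := by
    intro τ i h1 h2
    unfold wnu
    split_ifs <;> first | exact le_refl _ | exact hAB τ i h1 h2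
  have hν_lb : ∀ τ : F →+* ℂ, ∀ i, 1 ≤ i → i ≤ n →
      wA (μ τ) w n i ≤ wnu F μ w n τ i := by
    intro τ i h1 h2
    unfold wnu
    split_ifs <;> first | exact le_refl _ | exact hAB τ i h1 h2
  have hνeqB : ∀ τ : F →+* ℂ, ∀ i, 2*i ≤ n → wnu F μ w n τ i = wB (μ τ) w n i := by
    intro τ i h
    unfold wnu
    rw [if_pos h]
  have hνeqA : ∀ τ : F →+* ℂ, ∀ i, n+2 ≤ 2*i → wnu F μ w n τ i = wA (μ τ) w n i := by
    intro τ i h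
    unfold wnu
    rw [if_neg (by omega), if_pos h]
  -- purity of ν with w' = -w
  have hpureν : ∀ τ : F →+* ℂ, ∀ i, 1 ≤ i → i ≤ n →
      wnu F μ w n ((starRingEnd ℂ).comp τ) i = -w - wnu F μ w n τ (n+1-i) := by
    intro τ i h1 h2
    rcases lt_trichotomy (2*i) (n+1) with hc | hc | hc
    · rw [hνeqB _ i (by omega), hBρ τ i h1 h2, hνeqA τ (n+1-i) (by omega),
        hsym τ i h1 h2]
      ring
    · have hmid : n+1-i = i := by omega
      rw [hmid]
      have hsymi := hsym τ i h1 h2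
      rw [hmid] at hsymi
      have hm : ∀ σ : F →+* ℂ, wnu F μ w n σ i =
          if WellOrderingRel ((starRingEnd ℂ).comp σ) σ then wB (μ σ) w n i
          else wA (μ σ) w n i := by
        intro σ
        unfold wnu
        rw [if_neg (by omega), if_neg (by omega)]
      rw [hm ((starRingEnd ℂ).comp τ), hm τ, hρρ τ]
      rcases trichotomous_of WellOrderingRel τ ((starRingEnd ℂ).comp τ) with ht | ht | ht
      · rw [if_pos ht, if_neg (fun hh => irrefl τ (Trans.trans ht hh))]
        rw [hBρ τ i h1 h2]
        omega
      · exact absurd ht (hρne τ)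
      · rw [if_neg (fun hh => irrefl τ (Trans.trans hh ht)), if_pos ht]
        rw [hAρ τ i h1 h2]
        omega
    · rw [hνeqA _ i (by omega), hAρ τ i h1 h2, hνeqB τ (n+1-i) (by omega)]
      have h3 := hsym τ (n+1-i) (by omega) (by omega)
      rw [show n+1-(n+1-i) = i from by omega] at h3
      exact h3
  -- cross dominance
  have hcross : ∀ τ σ : F →+* ℂ, (σ = τ ∨ σ = (starRingEnd ℂ).comp τ) →
      ∀ i, 1 ≤ i → i + 1 ≤ n → wnu F μ w n σ (i+1) ≤ wnu F μ w n τ i := by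
    intro τ σ hσ i h1 h2
    have hBστ : wB (μ σ) w n (i+1) = wB (μ τ) w n (i+1) := by
      rcases hσ with rfl | rfl
      · rfl
      · exact hBρ τ (i+1) (by omega) h2
    have hAστ : wA (μ σ) w n (i+1) = wA (μ τ) w n (i+1) := by
      rcases hσ with rfl | rfl
      · rfl
      · exact hAρ τ (i+1) (by omega) h2
    by_cases hc : 2*i ≤ n
    · calc wnu F μ w n σ (i+1) ≤ wB (μ σ) w n (i+1) := hν_ub σ (i+1) (by omega) h2
        _ = wB (μ τ) w n (i+1) := hBστ
        _ ≤ wB (μ τ) w n i := hBmono τ i h1 h2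
        _ = wnu F μ w n τ i := (hνeqB τ i hc).symm
    · calc wnu F μ w n σ (i+1) = wA (μ σ) w n (i+1) := hνeqA σ (i+1) (by omega)
        _ = wA (μ τ) w n (i+1) := hAστ
        _ ≤ wA (μ τ) w n i := hAmono τ i h1 h2
        _ ≤ wnu F μ w n τ i := hν_lb τ i h1 (by omega)
  refine ⟨-w, by omega, wnu F μ w n, ?_, ?_, ?_, 0, ?_⟩
  · -- dominance
    intro τ i h1 h2
    exact hcross τ τ (Or.inl rfl) i h1 (by omega)
  · -- purity
    intro τ i h1 h2
    exact hpureν τ i h1 h2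
  · -- good position
    intro τ i h1 h2
    rw [show n - i = n+1-(i+1) from by omega, ← hpureν τ (i+1) (by omega) (by omega),
      ← hpureν τ i h1 (by omega)]
    have a1 := hcross τ τ (Or.inl rfl) i h1 (by omega)
    have a2 := hcross τ ((starRingEnd ℂ).comp τ) (Or.inr rfl) i h1 (by omega)
    have a3 := hcross ((starRingEnd ℂ).comp τ) τ (Or.inr (hρρ τ).symm) i h1 (by omega)
    have a4 := hcross ((starRingEnd ℂ).comp τ) ((starRingEnd ℂ).comp τ) (Or.inl rfl) i h1
      (by omega)
    omega
  · -- strong interlacing with m₀ = 0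
    intro τ τ₁ hτ₁ τ₂ hτ₂ i h1 h2
    simp only [Set.mem_insert_iff, Set.mem_singleton_iff] at hτ₁ hτ₂
    have hub : wnu F μ w n τ₂ i ≤ wB (μ τ) w n i := by
      rcases hτ₂ with rfl | rfl
      · exact hν_ub τ₂ i h1 h2
      · exact (hν_ub _ i h1 h2).trans_eq (hBρ τ i h1 h2)
    have hlb : wA (μ τ) w n i ≤ wnu F μ w n τ₂ i := by
      rcases hτ₂ with rfl | rfl
      · exact hν_lb τ₂ i h1 h2
      · exact (hAρ τ i h1 h2).symm.trans_le (hν_lb _ i h1 h2)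
    constructor
    · rcases hτ₁ with rfl | rfl
      · have h3 : wB (μ τ₁) w n i ≤ -μ τ₁ (n+2-i) := by
          simp only [wB]; exact min_le_right _ _
        omega
      · have e := hpure τ (n+2-i) (by omega) (by omega)
        rw [show n+2-(n+2-i) = i from by omega] at e
        have h3 : wB (μ τ) w n i ≤ μ τ i - w := by
          simp only [wB]; exact min_le_left _ _
        omega
    · rcases hτ₁ with rfl | rfl
      · have h3 : -μ τ₁ (n+1-i) ≤ wA (μ τ₁) w n i := by
          simp only [wA]; exact le_max_right _ _
        omega
      · have e := hpure τ (n+1-i) (by omega) (by omega)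
        rw [show n+2-(n+1-i) = i+1 from by omega] at e
        have h3 : μ τ (i+1) - w ≤ wA (μ τ) w n i := by
          simp only [wA]; exact le_max_left _ _
        omega
end

section
/- Let m ≥ 0, set n = 2m+1, and let w be an odd integer. Let μ_1 > μ_2 > ⋯ > μ_{n+1} be strictly decreasing integers satisfying μ_i + μ_{n+2−i} = w for all 1 ≤ i ≤ n+1. Then there exist integers ν_1 ≥ ν_2 ≥ ⋯ ≥ ν_n satisfying ν_i + ν_{n+1−i} = 1 − w for all 1 ≤ i ≤ n and −μ_{n+1−i} ≤ ν_i ≤ −μ_{n+2−i} for all 1 ≤ i ≤ n. -/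
/-- Remark 7.4: the strictly dominant, odd purity-weight case over a totally
real field (per real embedding), with `n = 2 * m + 1`. -/
theorem stmt_8 (m : ℕ) (w : ℤ) (hw : Odd w) (μ : ℕ → ℤ)
    (hμ : ∀ i j, 1 ≤ i → i < j → j ≤ 2 * m + 2 → μ j < μ i)
    (hpure : ∀ i, 1 ≤ i → i ≤ 2 * m + 2 → μ i + μ (2 * m + 3 - i) = w) :
    ∃ ν : ℕ → ℤ,
      (∀ i, 1 ≤ i → i < 2 * m + 1 → ν (i + 1) ≤ ν i) ∧
      (∀ i, 1 ≤ i → i ≤ 2 * m + 1 → ν i + ν (2 * m + 2 - i) = 1 - w) ∧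
      (∀ i, 1 ≤ i → i ≤ 2 * m + 1 → -μ (2 * m + 2 - i) ≤ ν i ∧ ν i ≤ -μ (2 * m + 3 - i)) := by
  obtain ⟨k, hk⟩ := hw
  have hmid : μ (m+1) + μ (m+2) = w := by
    have h := hpure (m+1) (by omega) (by omega)
    have e : 2*m+3-(m+1) = m+2 := by omega
    rwa [e] at h
  have hmidlt : μ (m+2) < μ (m+1) := hμ (m+1) (m+2) (by omega) (by omega) (by omega)
  have hm2 : μ (m+2) ≤ k := by omega
  have hm1 : k + 1 ≤ μ (m+1) := by omega
  refine ⟨fun i => if i ≤ m then -μ (2*m+3-i) else if i = m+1 then -k else 1 - w + μ (i+1),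
    ?_, ?_, ?_⟩
  · intro i hi1 hi2
    beta_reduce
    by_cases h1 : i + 1 ≤ m
    · rw [if_pos h1, if_pos (by omega : i ≤ m)]
      have h := hμ (2*m+2-i) (2*m+3-i) (by omega) (by omega) (by omega)
      have e : 2*m+3-(i+1) = 2*m+2-i := by omega
      rw [e]; omega
    · by_cases h2 : i + 1 = m + 1
      · rw [if_neg (by omega : ¬ i+1 ≤ m), if_pos h2, if_pos (by omega : i ≤ m)]
        have e : 2*m+3-i = m+3 := by omega
        rw [e]
        have h := hμ (m+2) (m+3) (by omega) (by omega) (by omega)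
        omega
      · by_cases h3 : i = m + 1
        · subst h3
          rw [if_neg (by omega : ¬ m+1+1 ≤ m), if_neg (by omega : ¬ m+1+1 = m+1),
            if_neg (by omega : ¬ m+1 ≤ m), if_pos (rfl : m+1 = m+1)]
          have h := hμ (m+2) (m+3) (by omega) (by omega) (by omega)
          have e : m+1+1+1 = m+3 := rfl
          rw [e]
          omega
        · rw [if_neg (by omega : ¬ i+1 ≤ m), if_neg (by omega : ¬ i+1 = m+1),
            if_neg (by omega : ¬ i ≤ m), if_neg h3]
          have h := hμ (i+1) (i+2) (by omega) (by omega) (by omega)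
          have e : i+1+1 = i+2 := rfl
          rw [e]
          omega
  · intro i hi1 hi2
    beta_reduce
    by_cases h1 : i ≤ m
    · rw [if_pos h1, if_neg (by omega : ¬ 2*m+2-i ≤ m), if_neg (by omega : ¬ 2*m+2-i = m+1)]
      have e : 2*m+2-i+1 = 2*m+3-i := by omega
      rw [e]; ring
    · by_cases h2 : i = m + 1
      · subst h2
        have e : 2*m+2-(m+1) = m+1 := by omega
        rw [e, if_neg (by omega : ¬ m+1 ≤ m), if_pos (rfl : m+1 = m+1)]
        omega
      · rw [if_neg h1, if_neg h2, if_pos (by omega : 2*m+2-i ≤ m)]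
        have e : 2*m+3-(2*m+2-i) = i+1 := by omega
        rw [e]; ring
  · intro i hi1 hi2
    beta_reduce
    by_cases h1 : i ≤ m
    · rw [if_pos h1]
      have h := hμ (2*m+2-i) (2*m+3-i) (by omega) (by omega) (by omega)
      omega
    · by_cases h2 : i = m + 1
      · subst h2
        have e1 : 2*m+2-(m+1) = m+1 := by omega
        have e2 : 2*m+3-(m+1) = m+2 := by omega
        rw [e1, e2, if_neg (by omega : ¬ m+1 ≤ m), if_pos (rfl : m+1 = m+1)]
        omega
      · rw [if_neg h1, if_neg h2]
        have hp1 := hpure (i+1) (by omega) (by omega)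
        have e1 : 2*m+3-(i+1) = 2*m+2-i := by omega
        rw [e1] at hp1
        have hp2 := hpure (2*m+3-i) (by omega) (by omega)
        have e2 : 2*m+3-(2*m+3-i) = i := by omega
        rw [e2] at hp2
        have h := hμ i (i+1) (by omega) (by omega) (by omega)
        omega
end

section
/- Let d⁺, d⁻ ∈ ℕ and d = d⁺ + d⁻. For y ∈ M_d(ℂ), let f⁺(y) denote the determinant of the upper-left d⁺ × d⁺ submatrix of y (rows and columns indexed by the first d⁺ indices). Let p ∈ M_d(ℂ) be a matrix whose upper-right d⁺ × d⁻ block vanishes (p_{kl} = 0 whenever k is among the first d⁺ indices and l is among the last d⁻ indices), let x ∈ M_d(ℂ) be arbitrary, let h⁺ ∈ M_{d⁺}(ℂ) and h⁻ ∈ M_{d⁻}(ℂ), and let D ∈ M_d(ℂ) be the block-diagonal matrix with diagonal blocks h⁺ and h⁻. Then f⁺(p · x · D) = f⁺(p) · det(h⁺) · f⁺(x). -/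
/-- Transformation law for the relative invariant `f⁺` (Section 3.2):
the determinant of the upper-left `d⁺ × d⁺` submatrix transforms under
left multiplication by a lower block-triangular matrix `p` and right
multiplication by the block-diagonal matrix `D = diag(h⁺, h⁻)` by the factor
`f⁺(p) · det h⁺`. -/
theorem stmt_10 (dp dm : ℕ)
    (p x : Matrix (Fin (dp + dm)) (Fin (dp + dm)) ℂ)
    (hplus : Matrix (Fin dp) (Fin dp) ℂ) (hminus : Matrix (Fin dm) (Fin dm) ℂ)
    (D : Matrix (Fin (dp + dm)) (Fin (dp + dm)) ℂ)
    (hD : D = (Matrix.fromBlocks hplus 0 0 hminus).submatrix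
      finSumFinEquiv.symm finSumFinEquiv.symm)
    (hp : ∀ (k : Fin dp) (l : Fin dm), p (Fin.castAdd dm k) (Fin.natAdd dp l) = 0) :
    ((p * x * D).submatrix (Fin.castAdd dm : Fin dp → Fin (dp + dm))
        (Fin.castAdd dm : Fin dp → Fin (dp + dm))).det
      = (p.submatrix (Fin.castAdd dm : Fin dp → Fin (dp + dm))
          (Fin.castAdd dm : Fin dp → Fin (dp + dm))).det
        * hplus.det
        * (x.submatrix (Fin.castAdd dm : Fin dp → Fin (dp + dm))
            (Fin.castAdd dm : Fin dp → Fin (dp + dm))).det := by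
  set e := finSumFinEquiv (m := dp) (n := dm) with he
  have key : ∀ M : Matrix (Fin (dp + dm)) (Fin (dp + dm)) ℂ,
      M.submatrix (Fin.castAdd dm : Fin dp → Fin (dp + dm))
        (Fin.castAdd dm : Fin dp → Fin (dp + dm))
      = (M.submatrix e e).toBlocks₁₁ := by
    intro M
    ext i j
    simp [Matrix.toBlocks₁₁, Matrix.submatrix_apply, he]
  have hsub : (p * x * D).submatrix e e
      = (p.submatrix e e) * (x.submatrix e e) * (D.submatrix e e) := by
    simp [Matrix.submatrix_mul_equiv]
  have hDsub : D.submatrix (e : Fin dp ⊕ Fin dm → Fin (dp + dm)) e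
      = Matrix.fromBlocks hplus 0 0 hminus := by
    subst hD
    ext i j
    simp
  have hP : p.submatrix (e : Fin dp ⊕ Fin dm → Fin (dp + dm)) e
      = Matrix.fromBlocks ((p.submatrix e e).toBlocks₁₁) 0
          ((p.submatrix e e).toBlocks₂₁) ((p.submatrix e e).toBlocks₂₂) := by
    have h12 : (p.submatrix (e : Fin dp ⊕ Fin dm → Fin (dp + dm)) e).toBlocks₁₂ = 0 := by
      ext i j
      simpa [Matrix.toBlocks₁₂, he] using hp i j
    conv_lhs => rw [← Matrix.fromBlocks_toBlocks (p.submatrix e e), h12]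
  have hX := (Matrix.fromBlocks_toBlocks (x.submatrix (e : Fin dp ⊕ Fin dm → Fin (dp + dm)) e)).symm
  rw [key, key, key, hsub, hDsub, hP, hX, Matrix.fromBlocks_multiply,
    Matrix.fromBlocks_multiply, Matrix.toBlocks_fromBlocks₁₁]
  simp [Matrix.det_mul, mul_comm, mul_assoc, mul_left_comm]
end

section
/- Let t ≥ 1 be an integer, let w_M, w_N ∈ ℤ, and let p_1 < p_2 < ⋯ < p_{t+1} and a_1 < a_2 < ⋯ < a_t be strictly increasing integer sequences. Define the conjugate sequences p̄_i := w_M − p_{t+2−i} (1 ≤ i ≤ t+1) and ā_j := w_N − a_{t+1−j} (1 ≤ j ≤ t). Assume there exists Q ∈ ℤ such that for every P ∈ {p, p̄}, every A ∈ {a, ā}, and every 1 ≤ i ≤ t one has −P_{t+2−i} < A_i + Q ≤ −P_{t+1−i} (the strong interlace condition with shift Q). Then for all 1 ≤ i ≤ t+1, 1 ≤ j ≤ t, P ∈ {p, p̄}, and A ∈ {a, ā}, one has 2(P_i + A_j) ≠ w_M + w_N. -/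
private lemma low_aux (t : ℕ) (Q : ℤ) (P A : ℕ → ℤ)
    (Amono : ∀ i j, 1 ≤ i → i ≤ j → j ≤ t → A i ≤ A j)
    (hI : ∀ k, 1 ≤ k → k ≤ t → A k + Q ≤ -P (t + 1 - k)) :
    ∀ i j, 1 ≤ i → 1 ≤ j → j ≤ t → i + j ≤ t + 1 → P i + A j + Q ≤ 0 := by
  intro i j hi hj hjt hij
  have h1 : A j ≤ A (t + 1 - i) := Amono j (t + 1 - i) hj (by omega) (by omega)
  have h2 := hI (t + 1 - i) (by omega) (by omega)
  have h3 : t + 1 - (t + 1 - i) = i := by omega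
  rw [h3] at h2
  linarith

private lemma high_aux (t : ℕ) (Q : ℤ) (P A : ℕ → ℤ)
    (Amono : ∀ i j, 1 ≤ i → i ≤ j → j ≤ t → A i ≤ A j)
    (hI : ∀ k, 1 ≤ k → k ≤ t → -P (t + 2 - k) < A k + Q) :
    ∀ i j, 1 ≤ i → i ≤ t + 1 → 1 ≤ j → j ≤ t → t + 2 ≤ i + j → 0 < P i + A j + Q := by
  intro i j hi hit hj hjt hij
  have h1 : A (t + 2 - i) ≤ A j := Amono (t + 2 - i) j (by omega) (by omega) hjt
  have h2 := hI (t + 2 - i) (by omega) (by omega)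
  have h3 : t + 2 - (t + 2 - i) = i := by omega
  rw [h3] at h2
  linarith

private lemma core (t : ℕ) (wM wN Q : ℤ) (P Pb A Ab : ℕ → ℤ)
    (Amono : ∀ i j, 1 ≤ i → i ≤ j → j ≤ t → A i ≤ A j)
    (Abmono : ∀ i j, 1 ≤ i → i ≤ j → j ≤ t → Ab i ≤ Ab j)
    (hconjP : ∀ i, 1 ≤ i → i ≤ t + 1 → P i + Pb (t + 2 - i) = wM)
    (hconjA : ∀ j, 1 ≤ j → j ≤ t → A j + Ab (t + 1 - j) = wN)
    (hI1 : ∀ k, 1 ≤ k → k ≤ t → -P (t + 2 - k) < A k + Q ∧ A k + Q ≤ -P (t + 1 - k))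
    (hI2 : ∀ k, 1 ≤ k → k ≤ t → -Pb (t + 2 - k) < Ab k + Q ∧ Ab k + Q ≤ -Pb (t + 1 - k)) :
    ∀ i j, 1 ≤ i → i ≤ t + 1 → 1 ≤ j → j ≤ t → 2 * (P i + A j) ≠ wM + wN := by
  intro i j hi hit hj hjt heq
  have hS : Pb (t + 2 - i) + Ab (t + 1 - j) = P i + A j := by
    have h1 := hconjP i hi hit
    have h2 := hconjA j hj hjt
    linarith
  rcases le_or_gt (i + j) (t + 1) with hle | hlt
  · have hlow := low_aux t Q P A Amono (fun k hk hkt => (hI1 k hk hkt).2) i j hi hj hjt hle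
    have hhigh := high_aux t Q Pb Ab Abmono (fun k hk hkt => (hI2 k hk hkt).1)
      (t + 2 - i) (t + 1 - j) (by omega) (by omega) (by omega) (by omega) (by omega)
    linarith
  · have hhigh := high_aux t Q P A Amono (fun k hk hkt => (hI1 k hk hkt).1)
      i j hi hit hj hjt (by omega)
    have hlow := low_aux t Q Pb Ab Abmono (fun k hk hkt => (hI2 k hk hkt).2)
      (t + 2 - i) (t + 1 - j) (by omega) (by omega) (by omega) (by omega)
    linarith

/-- Corollary 4.7: under the strong interlace condition no Hodge sum attains
the middle value `(wM + wN) / 2`. -/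
theorem stmt_13 (t : ℕ) (ht : 1 ≤ t) (wM wN : ℤ) (p a pbar abar : ℕ → ℤ)
    (hp : ∀ i j, 1 ≤ i → i < j → j ≤ t + 1 → p i < p j)
    (ha : ∀ i j, 1 ≤ i → i < j → j ≤ t → a i < a j)
    (hpbar : ∀ i, 1 ≤ i → i ≤ t + 1 → pbar i = wM - p (t + 2 - i))
    (habar : ∀ j, 1 ≤ j → j ≤ t → abar j = wN - a (t + 1 - j))
    (hQ : ∃ Q : ℤ, ∀ P ∈ ({p, pbar} : Set (ℕ → ℤ)), ∀ A ∈ ({a, abar} : Set (ℕ → ℤ)),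
      ∀ i, 1 ≤ i → i ≤ t → -P (t + 2 - i) < A i + Q ∧ A i + Q ≤ -P (t + 1 - i)) :
    ∀ P ∈ ({p, pbar} : Set (ℕ → ℤ)), ∀ A ∈ ({a, abar} : Set (ℕ → ℤ)),
    ∀ i j, 1 ≤ i → i ≤ t + 1 → 1 ≤ j → j ≤ t →
      2 * (P i + A j) ≠ wM + wN := by
  obtain ⟨Q, hQ⟩ := hQ
  have hpmem : p ∈ ({p, pbar} : Set (ℕ → ℤ)) := Or.inl rfl
  have hpbmem : pbar ∈ ({p, pbar} : Set (ℕ → ℤ)) := Or.inr rfl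
  have hamem : a ∈ ({a, abar} : Set (ℕ → ℤ)) := Or.inl rfl
  have habmem : abar ∈ ({a, abar} : Set (ℕ → ℤ)) := Or.inr rfl
  -- monotonicity (≤)
  have amono : ∀ i j, 1 ≤ i → i ≤ j → j ≤ t → a i ≤ a j := by
    intro i j hi hij hjt
    rcases eq_or_lt_of_le hij with h | h
    · rw [h]
    · exact le_of_lt (ha i j hi h hjt)
  have abmono : ∀ i j, 1 ≤ i → i ≤ j → j ≤ t → abar i ≤ abar j := by
    intro i j hi hij hjt
    rw [habar i hi (by omega), habar j (by omega) hjt]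
    have := amono (t + 1 - j) (t + 1 - i) (by omega) (by omega) (by omega)
    linarith
  -- conjugation identities
  have cP1 : ∀ i, 1 ≤ i → i ≤ t + 1 → p i + pbar (t + 2 - i) = wM := by
    intro i hi hit
    rw [hpbar (t + 2 - i) (by omega) (by omega)]
    have h3 : t + 2 - (t + 2 - i) = i := by omega
    rw [h3]; ring
  have cP2 : ∀ i, 1 ≤ i → i ≤ t + 1 → pbar i + p (t + 2 - i) = wM := by
    intro i hi hit
    rw [hpbar i hi hit]; ring
  have cA1 : ∀ j, 1 ≤ j → j ≤ t → a j + abar (t + 1 - j) = wN := by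
    intro j hj hjt
    rw [habar (t + 1 - j) (by omega) (by omega)]
    have h3 : t + 1 - (t + 1 - j) = j := by omega
    rw [h3]; ring
  have cA2 : ∀ j, 1 ≤ j → j ≤ t → abar j + a (t + 1 - j) = wN := by
    intro j hj hjt
    rw [habar j hj hjt]; ring
  intro P hP A hA
  simp only [Set.mem_insert_iff, Set.mem_singleton_iff] at hP hA
  rcases hP with hP | hP <;> rcases hA with hA | hA <;> rw [hP, hA]
  · exact core t wM wN Q p pbar a abar amono abmono cP1 cA1
      (hQ p hpmem a hamem) (hQ pbar hpbmem abar habmem)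
  · exact core t wM wN Q p pbar abar a abmono amono cP1 cA2
      (hQ p hpmem abar habmem) (hQ pbar hpbmem a hamem)
  · exact core t wM wN Q pbar p a abar amono abmono cP2 cA1
      (hQ pbar hpbmem a hamem) (hQ p hpmem abar habmem)
  · exact core t wM wN Q pbar p abar a abmono amono cP2 cA2
      (hQ pbar hpbmem abar habmem) (hQ p hpmem a hamem)
end

section
/- Let n ≥ 1 be an integer and w an even integer, and let μ_1 ≥ μ_2 ≥ ⋯ ≥ μ_{n+1} be integers satisfying μ_i + μ_{n+2−i} = w for all 1 ≤ i ≤ n+1. Then there exist integers ν_1 ≥ ν_2 ≥ ⋯ ≥ ν_n satisfying ν_i + ν_{n+1−i} = −w for all 1 ≤ i ≤ n and −μ_{n+2−i} ≥ ν_i ≥ −μ_{n+1−i} for all 1 ≤ i ≤ n. -/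
/-- Per-embedding core of the totally real case of Lemma 7.2: a dominant
tuple `μ` of length `n + 1` pure of even weight `w` admits a dominant tuple
`ν` of length `n` pure of weight `-w` interlacing the dual of `μ` with
shift 0. -/
theorem stmt_14 (n : ℕ) (hn : 1 ≤ n) (w : ℤ) (hw : Even w) (μ : ℕ → ℤ)
    (hdom : ∀ i, 1 ≤ i → i ≤ n → μ (i + 1) ≤ μ i)
    (hpure : ∀ i, 1 ≤ i → i ≤ n + 1 → μ i + μ (n + 2 - i) = w) :
    ∃ ν : ℕ → ℤ,
      (∀ i, 1 ≤ i → i < n → ν (i + 1) ≤ ν i) ∧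
      (∀ i, 1 ≤ i → i ≤ n → ν i + ν (n + 1 - i) = -w) ∧
      (∀ i, 1 ≤ i → i ≤ n → ν i ≤ -μ (n + 2 - i) ∧ -μ (n + 1 - i) ≤ ν i) := by
  obtain ⟨k, hk⟩ := hw
  set ν : ℕ → ℤ := fun i =>
    if 2 * i ≤ n then -μ (n + 2 - i) else if 2 * i = n + 1 then -k else -μ (n + 1 - i)
    with hν
  have key : ∀ i, 1 ≤ i → i ≤ n → ν i ≤ -μ (n + 2 - i) ∧ -μ (n + 1 - i) ≤ ν i := by
    intro i h1 h2
    rcases lt_trichotomy (2 * i) (n + 1) with h | h | h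
    · have hle : 2 * i ≤ n := by omega
      have e : ν i = -μ (n + 2 - i) := by simp [hν, hle]
      rw [e]
      have hd := hdom (n + 1 - i) (by omega) (by omega)
      have he : n + 1 - i + 1 = n + 2 - i := by omega
      rw [he] at hd
      exact ⟨le_refl _, by omega⟩
    · have h1' : ¬ (2 * i ≤ n) := by omega
      have e : ν i = -k := by simp [hν, h1', h]
      rw [e]
      have hp := hpure i (by omega) (by omega)
      have hd := hdom i h1 h2
      have he : n + 2 - i = i + 1 := by omega
      have he2 : n + 1 - i = i := by omega
      rw [he] at hp ⊢
      rw [he2]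
      omega
    · have h1' : ¬ (2 * i ≤ n) := by omega
      have h2' : ¬ (2 * i = n + 1) := by omega
      have e : ν i = -μ (n + 1 - i) := by simp [hν, h1', h2']
      rw [e]
      have hd := hdom (n + 1 - i) (by omega) (by omega)
      have he : n + 1 - i + 1 = n + 2 - i := by omega
      rw [he] at hd
      exact ⟨by omega, le_refl _⟩
  refine ⟨ν, ?_, ?_, key⟩
  · intro i h1 h2
    have a := (key (i + 1) (by omega) (by omega)).1
    have b := (key i h1 (by omega)).2
    have he : n + 2 - (i + 1) = n + 1 - i := by omega
    rw [he] at a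
    omega
  · intro i h1 h2
    rcases lt_trichotomy (2 * i) (n + 1) with h | h | h
    · have hle : 2 * i ≤ n := by omega
      have e1 : ν i = -μ (n + 2 - i) := by simp [hν, hle]
      have h1' : ¬ (2 * (n + 1 - i) ≤ n) := by omega
      have h2' : ¬ (2 * (n + 1 - i) = n + 1) := by omega
      have e2 : ν (n + 1 - i) = -μ (n + 1 - (n + 1 - i)) := by simp [hν, h1', h2']
      have he : n + 1 - (n + 1 - i) = i := by omega
      rw [he] at e2
      have hp := hpure i (by omega) (by omega)
      omega
    · have hi : n + 1 - i = i := by omega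
      have h1' : ¬ (2 * i ≤ n) := by omega
      have e1 : ν i = -k := by simp [hν, h1', h]
      rw [hi, e1]
      omega
    · have h1' : ¬ (2 * i ≤ n) := by omega
      have h2' : ¬ (2 * i = n + 1) := by omega
      have e1 : ν i = -μ (n + 1 - i) := by simp [hν, h1', h2']
      have hle : 2 * (n + 1 - i) ≤ n := by omega
      have e2 : ν (n + 1 - i) = -μ (n + 2 - (n + 1 - i)) := by simp [hν, hle]
      have he : n + 2 - (n + 1 - i) = i + 1 := by omega
      rw [he] at e2
      have hp := hpure (i + 1) (by omega) (by omega)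
      have he2 : n + 2 - (i + 1) = n + 1 - i := by omega
      rw [he2] at hp
      omega
end
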